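/- (Existence of gradient ρ-Einstein solitons on Walker manifolds with affine metric function, Case I of the paper's classification.) Let a, b, β, γ, p, q ∈ ℝ with a·γ = 0. Define φ : ℝ → ℝ by φ(x) = a x + b and f : ℝ³ → ℝ by f(t,x,y) = γ t + β x − (a β/4)·y² + p y + q. Then the pair (f, φ) together with λ = 0 satisfies the system (E) at every point of ℝ³; i.e., the 3-dimensional Walker manifold with metric 2 dt dy + dx² + (a x + b) dy² is a steady gradient ρ-Einstein soliton with potential function f. -/

import Mathlib

/-- Partial derivative in the first coordinate `t` of `f : ℝ³ → ℝ` at `(t,x,y)`. -/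
noncomputable def pdt (f : ℝ × ℝ × ℝ → ℝ) (t x y : ℝ) : ℝ :=
  deriv (fun s => f (s, x, y)) t

/-- Partial derivative in the second coordinate `x`. -/
noncomputable def pdx (f : ℝ × ℝ × ℝ → ℝ) (t x y : ℝ) : ℝ :=
  deriv (fun s => f (t, s, y)) x

/-- Partial derivative in the third coordinate `y`. -/
noncomputable def pdy (f : ℝ × ℝ × ℝ → ℝ) (t x y : ℝ) : ℝ :=
  deriv (fun s => f (t, x, s)) y

noncomputable def pdtt (f : ℝ × ℝ × ℝ → ℝ) (t x y : ℝ) : ℝ :=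
  deriv (fun s => pdt f s x y) t

noncomputable def pdtx (f : ℝ × ℝ × ℝ → ℝ) (t x y : ℝ) : ℝ :=
  deriv (fun s => pdt f t s y) x

noncomputable def pdty (f : ℝ × ℝ × ℝ → ℝ) (t x y : ℝ) : ℝ :=
  deriv (fun s => pdt f t x s) y

noncomputable def pdxx (f : ℝ × ℝ × ℝ → ℝ) (t x y : ℝ) : ℝ :=
  deriv (fun s => pdx f t s y) x

noncomputable def pdxy (f : ℝ × ℝ × ℝ → ℝ) (t x y : ℝ) : ℝ :=
  deriv (fun s => pdx f t x s) y

noncomputable def pdyy (f : ℝ × ℝ × ℝ → ℝ) (t x y : ℝ) : ℝ :=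
  deriv (fun s => pdy f t x s) y

/-- Case I of the paper's classification: the Walker manifold with affine
metric function `φ(x) = ax + b` is a steady gradient ρ-Einstein soliton with
potential `f(t,x,y) = γt + βx - (aβ/4)y² + py + q`, provided `a·γ = 0`. -/
theorem walker_soliton_case_I
    (a b β γ p q : ℝ) (haγ : a * γ = 0)
    (φ : ℝ → ℝ) (hφ : φ = fun x => a * x + b)
    (f : ℝ × ℝ × ℝ → ℝ)
    (hf : f = fun w =>
      γ * w.1 + β * w.2.1 - (a * β / 4) * w.2.2^2 + p * w.2.2 + q) :
    ∀ t x y : ℝ,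
      pdtt f t x y = 0 ∧
      pdtx f t x y = 0 ∧
      pdty f t x y = 0 ∧
      pdxx f t x y = 0 ∧
      pdxy f t x y - (1/2) * deriv φ x * pdt f t x y = 0 ∧
      -(1/2) * deriv (deriv φ) x + pdyy f t x y
          + (1/2) * deriv φ x * pdx f t x y = 0 * φ x := by
  subst hf hφ
  intro t x y
  have hpdt : ∀ t x y : ℝ, pdt (fun w : ℝ × ℝ × ℝ =>
      γ * w.1 + β * w.2.1 - (a * β / 4) * w.2.2^2 + p * w.2.2 + q) t x y = γ := by
    intro t x y
    have h : HasDerivAt (fun s : ℝ =>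
        γ * s + β * x - (a * β / 4) * y^2 + p * y + q) γ t := by
      simpa using
        (((((hasDerivAt_id t).const_mul γ).add_const (β * x)).sub_const
          ((a * β / 4) * y^2)).add_const (p * y)).add_const q
    exact h.deriv
  have hpdx : ∀ t x y : ℝ, pdx (fun w : ℝ × ℝ × ℝ =>
      γ * w.1 + β * w.2.1 - (a * β / 4) * w.2.2^2 + p * w.2.2 + q) t x y = β := by
    intro t x y
    have h : HasDerivAt (fun s : ℝ =>
        γ * t + β * s - (a * β / 4) * y^2 + p * y + q) β x := by
      simpa using
        ((((((hasDerivAt_id x).const_mul β).const_add (γ * t)).sub_const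
          ((a * β / 4) * y^2)).add_const (p * y)).add_const q)
    exact h.deriv
  have hpdy : ∀ t x y : ℝ, pdy (fun w : ℝ × ℝ × ℝ =>
      γ * w.1 + β * w.2.1 - (a * β / 4) * w.2.2^2 + p * w.2.2 + q) t x y
      = -(a * β / 2) * y + p := by
    intro t x y
    have h : HasDerivAt (fun s : ℝ =>
        γ * t + β * x - (a * β / 4) * s^2 + p * s + q)
        (-(a * β / 2) * y + p) y := by
      have h1 : HasDerivAt (fun s : ℝ => γ * t + β * x - (a * β / 4) * s^2)
          (-((a * β / 4) * (2 * y))) y := by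
        simpa using (((hasDerivAt_pow 2 y).const_mul (a * β / 4)).const_sub
          (γ * t + β * x))
      have h2 := (h1.add (((hasDerivAt_id y).const_mul p))).add_const q
      exact h2.congr_deriv (by ring)
    exact h.deriv
  have hφ' : deriv (fun x : ℝ => a * x + b) = fun _ => a := by
    funext z
    have h : HasDerivAt (fun x : ℝ => a * x + b) a z := by
      simpa using ((hasDerivAt_id z).const_mul a).add_const b
    exact h.deriv
  refine ⟨?_, ?_, ?_, ?_, ?_, ?_⟩
  · simp [pdtt, hpdt]
  · simp [pdtx, hpdt]
  · simp [pdty, hpdt]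
  · simp [pdxx, hpdx]
  · simp only [pdxy, hpdx, hpdt, hφ']
    simp
    rcases mul_eq_zero.mp haγ with h | h <;> simp [h]
  · simp only [pdyy, hpdy, hpdx, hφ']
    have h : HasDerivAt (fun s : ℝ => -(a * β / 2) * s + p) (-(a * β / 2)) y := by
      simpa using ((hasDerivAt_id y).const_mul (-(a * β / 2))).add_const p
    rw [h.deriv]
    simp
    ring
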